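/- Every infinite bottleneck congestion game G = (N, Δ, π) in which all cost functions c_f : ℝ≥0 → ℝ≥0 are nondecreasing and continuous possesses a strong Nash equilibrium. -/

import Mathlib

open Finset

/-- The vector `a` sorted in non-increasing order. -/
noncomputable def sortDesc {α : Type*} [LinearOrder α] {q : ℕ} (a : Fin q → α) : Fin q → α :=
  fun i => a (Tuple.sort a i.rev)

/-- `a` is strictly sorted-lexicographically smaller than `b`. -/
def SLexLt {α : Type*} [LinearOrder α] {q : ℕ} (a b : Fin q → α) : Prop :=
  ∃ m : Fin q, (∀ i, i < m → sortDesc a i = sortDesc b i) ∧ sortDesc a m < sortDesc b m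

/-- Sorted-lexicographic comparison of vectors indexed by an arbitrary finite type. -/
def SLexLtOn {α : Type*} [LinearOrder α] {ι : Type*} [Fintype ι] (a b : ι → α) : Prop :=
  SLexLt (a ∘ (Fintype.equivFin ι).symm) (b ∘ (Fintype.equivFin ι).symm)

/-- An improving move: some nonempty coalition `S` deviates (players outside `S`
keep their strategies) and every member of `S` strictly decreases her cost. -/
def ImprovingMove {ι : Type*} {X : ι → Type*} {β : Type*} [Preorder β]
    (π : (∀ i, X i) → ι → β) (x y : ∀ i, X i) : Prop :=
  ∃ S : Finset ι, S.Nonempty ∧ (∀ i ∉ S, y i = x i) ∧ ∀ i ∈ S, π y i < π x i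

open scoped NNReal

/-- The load of facility `f` under a splittable strategy profile `ξ`:
the sum of all intensities put on pure strategies containing `f`. -/
noncomputable def facLoad {ι F : Type*} [Fintype ι] [Fintype F] [DecidableEq F] {ni : ι → ℕ}
    (strat : ∀ i, Fin (ni i) → Finset F) (ξ : ∀ i, Fin (ni i) → ℝ≥0) (f : F) : ℝ≥0 :=
  ∑ i, ∑ j ∈ Finset.univ.filter (fun j => f ∈ strat i j), ξ i j

/-- The set `F_i(ξ)` of facilities used by player `i` under profile `ξ`. -/
noncomputable def usedFac {ι F : Type*} [Fintype F] [DecidableEq F] {ni : ι → ℕ}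
    (strat : ∀ i, Fin (ni i) → Finset F) (ξ : ∀ i, Fin (ni i) → ℝ≥0) (i : ι) : Finset F :=
  Finset.univ.filter (fun f => ∃ j, f ∈ strat i j ∧ 0 < ξ i j)

/-- The private (bottleneck) cost `π_i(ξ) = max_{f ∈ F_i(ξ)} c_f(ℓ_f(ξ))` of
player `i` in an infinite bottleneck congestion game. -/
noncomputable def btlCost {ι F : Type*} [Fintype ι] [Fintype F] [DecidableEq F] {ni : ι → ℕ}
    (c : F → ℝ≥0 → ℝ≥0) (strat : ∀ i, Fin (ni i) → Finset F)
    (ξ : ∀ i, Fin (ni i) → ℝ≥0) (i : ι) : ℝ≥0 :=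
  (usedFac strat ξ i).sup (fun f => c f (facLoad strat ξ f))


open Filter

section auxlemmas


section kth
variable {F : Type*} [Fintype F] [DecidableEq F]

/-- The `k`-th largest value of `v` (max over `k`-subsets of the min). -/
noncomputable def kthLargest (k : ℕ) (v : F → ℝ≥0) : ℝ≥0 :=
  (Finset.univ.powersetCard k).sup (fun A => if h : A.Nonempty then A.inf' h v else 0)

lemma le_kthLargest {k : ℕ} {v : F → ℝ≥0} {t : ℝ≥0} (A : Finset F) (hA : A.card = k)
    (hne : A.Nonempty) (h : ∀ f ∈ A, t ≤ v f) : t ≤ kthLargest k v := by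
  have hmem : A ∈ Finset.univ.powersetCard k := by
    simp [Finset.mem_powersetCard, hA]
  refine le_trans ?_ (Finset.le_sup hmem)
  rw [dif_pos hne]
  exact Finset.le_inf' hne v h

lemma kthLargest_le {k : ℕ} {v : F → ℝ≥0} {x : ℝ≥0}
    (h : ∀ (A : Finset F) (hne : A.Nonempty), A.card = k → A.inf' hne v ≤ x) :
    kthLargest k v ≤ x := by
  refine Finset.sup_le fun A hA => ?_
  rw [Finset.mem_powersetCard] at hA
  by_cases hne : A.Nonempty
  · rw [dif_pos hne]; exact h A hne hA.2
  · rw [dif_neg hne]; exact zero_le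

lemma kthLargest_witness {k : ℕ} (hk : k ≤ Fintype.card F) {v : F → ℝ≥0} {t : ℝ≥0}
    (ht : 0 < t) (h : t ≤ kthLargest k v) : ∃ A : Finset F, A.card = k ∧ ∀ f ∈ A, t ≤ v f := by
  have hne : (Finset.univ.powersetCard k (α := F)).Nonempty := by
    rw [Finset.powersetCard_nonempty]
    simpa using hk
  obtain ⟨A, hAmem, hsup⟩ := Finset.exists_mem_eq_sup _ hne
    (fun A : Finset F => if h : A.Nonempty then A.inf' h v else 0)
  rw [Finset.mem_powersetCard] at hAmem
  rw [kthLargest, hsup] at h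
  by_cases hA : A.Nonempty
  · rw [dif_pos hA] at h
    exact ⟨A, hAmem.2, fun f hf => le_trans h (Finset.inf'_le v hf)⟩
  · rw [dif_neg hA] at h
    exact absurd (lt_of_lt_of_le ht h) (lt_irrefl 0)

end kth

section topo
variable {γ β : Type*} {l : Filter γ}

lemma tendsto_finset_sup_nnreal (s : Finset β) {g : β → γ → ℝ≥0} {L : β → ℝ≥0}
    (h : ∀ b ∈ s, Tendsto (g b) l (nhds (L b))) :
    Tendsto (fun x => s.sup (fun b => g b x)) l (nhds (s.sup L)) := by
  classical
  induction s using Finset.induction_on with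
  | empty => simpa using tendsto_const_nhds
  | insert _ _ ha IH =>
      simp only [Finset.sup_insert]
      exact (h _ (Finset.mem_insert_self _ _)).max
        (IH fun b hb => h b (Finset.mem_insert_of_mem hb))

lemma tendsto_finset_inf'_nnreal {s : Finset β} (hs : s.Nonempty) {g : β → γ → ℝ≥0}
    {L : β → ℝ≥0} (h : ∀ b ∈ s, Tendsto (g b) l (nhds (L b))) :
    Tendsto (fun x => s.inf' hs (fun b => g b x)) l (nhds (s.inf' hs L)) := by
  classical
  induction hs using Finset.Nonempty.cons_induction with
  | singleton a =>
      simp only [Finset.inf'_singleton]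
      exact h a (Finset.mem_singleton_self a)
  | cons a s ha hs IH =>
      simp only [Finset.inf'_cons hs]
      exact (h _ (Finset.mem_cons_self _ _)).min
        (IH fun b hb => h b (Finset.mem_cons_of_mem hb))

variable {F : Type*} [Fintype F] [DecidableEq F]

lemma tendsto_kthLargest (k : ℕ) {w : F → γ → ℝ≥0} {L : F → ℝ≥0}
    (hw : ∀ f, Tendsto (w f) l (nhds (L f))) :
    Tendsto (fun x => kthLargest k (fun f => w f x)) l (nhds (kthLargest k L)) := by
  unfold kthLargest
  refine tendsto_finset_sup_nnreal _ fun A _ => ?_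
  by_cases hA : A.Nonempty
  · simp only [dif_pos hA]
    exact tendsto_finset_inf'_nnreal hA fun f _ => hw f
  · simp only [dif_neg hA]
    exact tendsto_const_nhds

lemma continuous_kthLargest {X : Type*} [TopologicalSpace X] (k : ℕ) {w : F → X → ℝ≥0}
    (hw : ∀ f, Continuous (w f)) : Continuous fun x => kthLargest k (fun f => w f x) := by
  rw [continuous_iff_continuousAt]
  intro x
  exact tendsto_kthLargest k fun f => (hw f).continuousAt

end topo

/-- Iterated minimization of a sequence of continuous functionals on a compact set. -/
lemma exists_iterated_min {X : Type*} [TopologicalSpace X] [T2Space X] :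
    ∀ (m : ℕ) (V : ℕ → X → ℝ≥0), (∀ k, Continuous (V k)) → ∀ (K : Set X), IsCompact K →
      K.Nonempty → ∃ x ∈ K, ∀ y ∈ K, ∀ k < m, (∀ j < k, V j y ≤ V j x) → ¬ (V k y < V k x) := by
  intro m
  induction m with
  | zero => intro V hV K hK ⟨x, hx⟩; exact ⟨x, hx, fun y hy k hk => absurd hk (Nat.not_lt_zero k)⟩
  | succ m IH =>
      intro V hV K hK hne
      obtain ⟨x₀, hx₀K, hmin⟩ := hK.exists_isMinOn hne (hV 0).continuousOn
      set K' : Set X := K ∩ {x | V 0 x ≤ V 0 x₀} with hK'def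
      have hK'c : IsCompact K' := hK.inter_right (isClosed_le (hV 0) continuous_const)
      have hK'ne : K'.Nonempty := ⟨x₀, hx₀K, show V 0 x₀ ≤ V 0 x₀ from le_rfl⟩
      obtain ⟨x, hxK', hx⟩ := IH (fun k => V (k + 1)) (fun k => hV (k + 1)) K' hK'c hK'ne
      refine ⟨x, hxK'.1, fun y hy k hk hdom hlt => ?_⟩
      match k with
      | 0 => exact absurd hlt (not_lt_of_ge (le_trans hxK'.2 (hmin hy)))
      | Nat.succ k =>
          have hyK' : y ∈ K' := ⟨hy, le_trans (hdom 0 (Nat.succ_pos k)) hxK'.2⟩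
          exact hx y hyK' k (Nat.lt_of_succ_lt_succ hk)
            (fun j hj => hdom (j + 1) (Nat.succ_lt_succ hj)) hlt

section game
variable {ι F : Type*} [Fintype ι] [Fintype F] [DecidableEq F] {ni : ι → ℕ}
  (strat : ∀ i, Fin (ni i) → Finset F)

/-- Contribution of player `i` to the load of facility `f`. -/
noncomputable def contrib (x : ∀ i, Fin (ni i) → ℝ≥0) (i : ι) (f : F) : ℝ≥0 :=
  ∑ j ∈ Finset.univ.filter (fun j => f ∈ strat i j), x i j

lemma facLoad_eq_sum_contrib (x : ∀ i, Fin (ni i) → ℝ≥0) (f : F) :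
    facLoad strat x f = ∑ i, contrib strat x i f := rfl

lemma mem_usedFac {x : ∀ i, Fin (ni i) → ℝ≥0} {i : ι} {f : F} :
    f ∈ usedFac strat x i ↔ ∃ j, f ∈ strat i j ∧ 0 < x i j := by
  unfold usedFac
  rw [Finset.mem_filter]
  simp

lemma usedFac_nonempty {x : ∀ i, Fin (ni i) → ℝ≥0} {i : ι}
    (hstrat : ∀ i j, (strat i j).Nonempty) (hx : 0 < ∑ j, x i j) :
    (usedFac strat x i).Nonempty := by
  have : ∑ _j : Fin (ni i), (0 : ℝ≥0) < ∑ j, x i j := by simpa using hx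
  obtain ⟨j, -, hj⟩ := Finset.exists_lt_of_sum_lt this
  obtain ⟨f, hf⟩ := hstrat i j
  exact ⟨f, (mem_usedFac strat).2 ⟨j, hf, hj⟩⟩

lemma contrib_pos_of_used {x : ∀ i, Fin (ni i) → ℝ≥0} {i : ι} {f : F}
    (h : f ∈ usedFac strat x i) : 0 < contrib strat x i f := by
  obtain ⟨j, hj, hx⟩ := (mem_usedFac strat).1 h
  refine lt_of_lt_of_le hx (Finset.single_le_sum (fun _ _ => zero_le) ?_)
  simp [hj]

lemma contrib_eq_zero_of_not_used {x : ∀ i, Fin (ni i) → ℝ≥0} {i : ι} {f : F}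
    (h : f ∉ usedFac strat x i) : contrib strat x i f = 0 := by
  rw [mem_usedFac] at h
  push_neg at h
  refine Finset.sum_eq_zero fun j hj => ?_
  rw [Finset.mem_filter] at hj
  simpa using h j hj.2

lemma contrib_eq_of_eq {x y : ∀ i, Fin (ni i) → ℝ≥0} {i : ι} (h : y i = x i) (f : F) :
    contrib strat y i f = contrib strat x i f := by
  unfold contrib; rw [h]

lemma load_increase_witness {x y : ∀ i, Fin (ni i) → ℝ≥0} {S : Finset ι}
    (hout : ∀ i ∉ S, y i = x i) {f : F} (h : facLoad strat x f < facLoad strat y f) :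
    ∃ i ∈ S, f ∈ usedFac strat y i := by
  obtain ⟨i, -, hi⟩ := Finset.exists_lt_of_sum_lt h
  obtain ⟨j, hjmem, hj⟩ := Finset.exists_lt_of_sum_lt hi
  rw [Finset.mem_filter] at hjmem
  have hiS : i ∈ S := by
    by_contra hiS
    rw [hout i hiS] at hj
    exact lt_irrefl _ hj
  exact ⟨i, hiS, (mem_usedFac strat).2 ⟨j, hjmem.2, lt_of_le_of_lt (zero_le) hj⟩⟩

lemma improving_lex {d : ι → ℝ≥0} (hd : ∀ i, 0 < d i) (hstrat : ∀ i j, (strat i j).Nonempty)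
    (c : F → ℝ≥0 → ℝ≥0) (hc : ∀ f, StrictMono (c f))
    {ξ ν : ∀ i, Fin (ni i) → ℝ≥0} (hξ : ∀ i, ∑ j, ξ i j = d i) (hν : ∀ i, ∑ j, ν i j = d i)
    (hmove : ImprovingMove (btlCost c strat) ξ ν) :
    ∃ k < Fintype.card F,
      (∀ j < k, kthLargest (j+1) (fun f => c f (facLoad strat ν f)) ≤
        kthLargest (j+1) (fun f => c f (facLoad strat ξ f))) ∧
      kthLargest (k+1) (fun f => c f (facLoad strat ν f)) <
        kthLargest (k+1) (fun f => c f (facLoad strat ξ f)) := by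
  classical
  set a : F → ℝ≥0 := fun f => c f (facLoad strat ν f) with ha
  set b : F → ℝ≥0 := fun f => c f (facLoad strat ξ f) with hb
  obtain ⟨S, hSne, hout, hin⟩ := hmove
  set v := S.sup' hSne (btlCost c strat ξ) with hv
  have hπν : ∀ i ∈ S, btlCost c strat ν i < v :=
    fun i hi => lt_of_lt_of_le (hin i hi) (Finset.le_sup' _ hi)
  -- (A) facilities with increased load have small new cost
  have hinc : ∀ f, facLoad strat ξ f < facLoad strat ν f → a f < v := by
    intro f hf
    obtain ⟨i, hiS, hfused⟩ := load_increase_witness strat hout hf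
    exact lt_of_le_of_lt (Finset.le_sup (f := fun f => c f (facLoad strat ν f)) hfused) (hπν i hiS)
  -- the player attaining the max old cost and its bottleneck facility
  obtain ⟨i₀, hi₀S, hi₀⟩ := Finset.exists_mem_eq_sup' hSne (btlCost c strat ξ)
  have huse0 : (usedFac strat ξ i₀).Nonempty :=
    usedFac_nonempty strat hstrat (by rw [hξ i₀]; exact hd i₀)
  obtain ⟨g, hgmem, hgval⟩ :=
    Finset.exists_mem_eq_sup (usedFac strat ξ i₀) huse0 (fun f => c f (facLoad strat ξ f))
  have hbg : b g = v := by rw [hb]; rw [hv, hi₀, btlCost, hgval]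
  -- (B) the load of g strictly decreases
  have hgdec : facLoad strat ν g < facLoad strat ξ g := by
    rcases lt_trichotomy (facLoad strat ν g) (facLoad strat ξ g) with h | h | h
    · exact h
    · exfalso
      have hπi₀ : btlCost c strat ν i₀ < v := hπν i₀ hi₀S
      have hag : a g = v := by rw [ha]; simp only; rw [h]; exact hbg
      have hgnotν : g ∉ usedFac strat ν i₀ := by
        intro hmemν
        have : a g ≤ btlCost c strat ν i₀ :=
          Finset.le_sup (f := fun f => c f (facLoad strat ν f)) hmemν
        rw [hag] at this
        exact absurd hπi₀ (not_lt_of_ge this)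
      have h1 : contrib strat ν i₀ g = 0 := contrib_eq_zero_of_not_used strat hgnotν
      have h2 : 0 < contrib strat ξ i₀ g := contrib_pos_of_used strat hgmem
      have hsum : ∑ i, contrib strat ν i g = ∑ i, contrib strat ξ i g := by
        rw [← facLoad_eq_sum_contrib, ← facLoad_eq_sum_contrib, h]
      have hrest : ∑ i ∈ Finset.univ.erase i₀, contrib strat ξ i g <
          ∑ i ∈ Finset.univ.erase i₀, contrib strat ν i g := by
        have e1 : ∑ i, contrib strat ν i g =
            contrib strat ν i₀ g + ∑ i ∈ Finset.univ.erase i₀, contrib strat ν i g :=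
          (Finset.add_sum_erase _ _ (Finset.mem_univ i₀)).symm
        have e2 : ∑ i, contrib strat ξ i g =
            contrib strat ξ i₀ g + ∑ i ∈ Finset.univ.erase i₀, contrib strat ξ i g :=
          (Finset.add_sum_erase _ _ (Finset.mem_univ i₀)).symm
        rw [e1, e2, h1, zero_add] at hsum
        rw [hsum]
        exact lt_add_of_pos_left _ h2
      obtain ⟨i₁, hi₁mem, hi₁lt⟩ := Finset.exists_lt_of_sum_lt hrest
      have hi₁S : i₁ ∈ S := by
        by_contra hi₁S
        rw [contrib_eq_of_eq strat (hout i₁ hi₁S)] at hi₁lt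
        exact lt_irrefl _ hi₁lt
      have hgν : g ∈ usedFac strat ν i₁ := by
        obtain ⟨j, hjmem, hj⟩ := Finset.exists_lt_of_sum_lt hi₁lt
        rw [Finset.mem_filter] at hjmem
        exact (mem_usedFac strat).2 ⟨j, hjmem.2, lt_of_le_of_lt (zero_le) hj⟩
      have : a g ≤ btlCost c strat ν i₁ :=
        Finset.le_sup (f := fun f => c f (facLoad strat ν f)) hgν
      rw [hag] at this
      exact absurd (hπν i₁ hi₁S) (not_lt_of_ge this)
    · exfalso
      have hba : b g ≤ a g := (hc g).monotone h.le
      rw [hbg] at hba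
      exact absurd (hinc g h) (not_lt_of_ge hba)
  have hag : a g < v := by rw [← hbg]; exact hc g hgdec
  have hvpos : 0 < v := lt_of_le_of_lt (zero_le) hag
  -- subset property at high thresholds
  have hsub : ∀ t, v ≤ t →
      (Finset.univ.filter fun f => t ≤ a f) ⊆ (Finset.univ.filter fun f => t ≤ b f) := by
    intro t ht f hf
    rw [Finset.mem_filter] at hf ⊢
    refine ⟨Finset.mem_univ _, ?_⟩
    by_contra hbf
    push_neg at hbf
    have hload : facLoad strat ξ f < facLoad strat ν f := by
      by_contra hload
      push_neg at hload
      exact absurd (le_trans hf.2 ((hc f).monotone hload)) (not_le_of_gt hbf)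
    exact absurd hf.2 (not_le_of_gt (lt_of_lt_of_le (hinc f hload) ht))
  set B := Finset.univ.filter fun f => v ≤ b f with hB
  have hgB : g ∈ B := by rw [hB, Finset.mem_filter]; exact ⟨Finset.mem_univ _, le_of_eq hbg.symm⟩
  have hBpos : 0 < B.card := Finset.card_pos.2 ⟨g, hgB⟩
  have hBle : B.card ≤ Fintype.card F := by
    simpa using Finset.card_filter_le Finset.univ (fun f => v ≤ b f)
  have hle : ∀ r, 0 < r → r ≤ B.card → kthLargest r a ≤ kthLargest r b := by
    intro r hr hrB
    refine kthLargest_le fun A hne hcard => ?_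
    rcases le_or_gt v (A.inf' hne a) with hvt | htv
    · refine le_kthLargest A hcard hne fun f hf => ?_
      have hmem : f ∈ Finset.univ.filter fun f' => A.inf' hne a ≤ b f' :=
        hsub _ hvt (Finset.mem_filter.2 ⟨Finset.mem_univ _, Finset.inf'_le a hf⟩)
      exact (Finset.mem_filter.1 hmem).2
    · obtain ⟨A', hA'sub, hA'card⟩ := Finset.exists_subset_card_eq hrB
      refine le_kthLargest A' hA'card (Finset.card_pos.1 (hA'card ▸ hr)) fun f hf => ?_
      exact le_trans htv.le (Finset.mem_filter.1 (hA'sub hf)).2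
  refine ⟨B.card - 1, by omega, fun j hj => hle (j+1) (Nat.succ_pos j) (by omega), ?_⟩
  have hk1 : B.card - 1 + 1 = B.card := by omega
  rw [hk1]
  have h1 : v ≤ kthLargest B.card b :=
    le_kthLargest B rfl ⟨g, hgB⟩ (fun f hf => (Finset.mem_filter.1 hf).2)
  have h2 : kthLargest B.card a < v := by
    by_contra hcon
    push_neg at hcon
    obtain ⟨A, hAc, hAge⟩ := kthLargest_witness hBle hvpos hcon
    have hsubE : A ⊆ B.erase g := by
      intro f hf
      refine Finset.mem_erase.2 ⟨?_, ?_⟩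
      · intro hfg
        rw [hfg] at hf
        exact absurd (hAge g hf) (not_le_of_gt hag)
      · exact hsub v le_rfl (Finset.mem_filter.2 ⟨Finset.mem_univ _, hAge f hf⟩)
    have := Finset.card_le_card hsubE
    rw [hAc, Finset.card_erase_of_mem hgB] at this
    omega
  exact lt_of_lt_of_le h2 h1

end game


section strictcase
variable {ι F : Type*} [Fintype ι] [Fintype F] [DecidableEq F] {ni : ι → ℕ}

lemma continuous_facLoad (strat : ∀ i, Fin (ni i) → Finset F) (f : F) :
    Continuous fun x : ∀ i, Fin (ni i) → ℝ≥0 => facLoad strat x f := by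
  unfold facLoad
  exact continuous_finset_sum _ fun i _ =>
    continuous_finset_sum _ fun j _ => (continuous_apply j).comp (continuous_apply i)

lemma feas_isCompact (d : ι → ℝ≥0) :
    IsCompact {x : ∀ i, Fin (ni i) → ℝ≥0 | ∀ i, ∑ j, x i j = d i} := by
  have hsumcont : ∀ i, Continuous fun x : ∀ i, Fin (ni i) → ℝ≥0 => ∑ j, x i j := fun i =>
    continuous_finset_sum _ fun j _ => (continuous_apply j).comp (continuous_apply i)
  have hclosed : IsClosed {x : ∀ i, Fin (ni i) → ℝ≥0 | ∀ i, ∑ j, x i j = d i} := by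
    have : {x : ∀ i, Fin (ni i) → ℝ≥0 | ∀ i, ∑ j, x i j = d i} =
        ⋂ i, {x | ∑ j, x i j = d i} := by
      ext x; simp [Set.mem_iInter]
    rw [this]
    exact isClosed_iInter fun i => isClosed_eq (hsumcont i) continuous_const
  have hbox : IsCompact (Set.univ.pi fun i : ι =>
      (Set.univ.pi fun _j : Fin (ni i) => Set.Icc (0 : ℝ≥0) (d i))) :=
    isCompact_univ_pi fun i => isCompact_univ_pi fun _j => isCompact_Icc
  refine IsCompact.of_isClosed_subset hbox hclosed ?_
  · intro x hx
    refine Set.mem_univ_pi.2 fun i => Set.mem_univ_pi.2 fun j => ?_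
    refine ⟨zero_le, ?_⟩
    rw [← hx i]
    exact Finset.single_le_sum (fun _ _ => zero_le) (Finset.mem_univ j)

lemma feas_nonempty (hni : ∀ i, 0 < ni i) (d : ι → ℝ≥0) :
    Set.Nonempty {x : ∀ i, Fin (ni i) → ℝ≥0 | ∀ i, ∑ j, x i j = d i} := by
  refine ⟨fun i j => if j = ⟨0, hni i⟩ then d i else 0, fun i => ?_⟩
  rw [Finset.sum_ite_eq' Finset.univ (⟨0, hni i⟩ : Fin (ni i)) (fun _ => d i)]
  simp

/-- Strong equilibrium existence for strictly increasing continuous cost functions. -/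
lemma sne_strict (hni : ∀ i, 0 < ni i)
    (strat : ∀ i, Fin (ni i) → Finset F) (hstrat : ∀ i j, (strat i j).Nonempty)
    (d : ι → ℝ≥0) (hd : ∀ i, 0 < d i)
    (c : F → ℝ≥0 → ℝ≥0) (hc : ∀ f, StrictMono (c f)) (hcont : ∀ f, Continuous (c f)) :
    ∃ ξ : ∀ i, Fin (ni i) → ℝ≥0, (∀ i, ∑ j, ξ i j = d i) ∧
      ∀ ν : ∀ i, Fin (ni i) → ℝ≥0, (∀ i, ∑ j, ν i j = d i) →
        ¬ ImprovingMove (btlCost c strat) ξ ν := by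
  classical
  set K : Set (∀ i, Fin (ni i) → ℝ≥0) := {x | ∀ i, ∑ j, x i j = d i} with hK
  set V : ℕ → (∀ i, Fin (ni i) → ℝ≥0) → ℝ≥0 :=
    fun k x => kthLargest (k + 1) (fun f => c f (facLoad strat x f)) with hV
  have hVc : ∀ k, Continuous (V k) := fun k =>
    continuous_kthLargest (k + 1) fun f => (hcont f).comp (continuous_facLoad strat f)
  obtain ⟨x, hxK, hmin⟩ := exists_iterated_min (Fintype.card F) V hVc K
    (feas_isCompact d) (feas_nonempty hni d)
  refine ⟨x, hxK, fun ν hν hmove => ?_⟩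
  obtain ⟨k, hk, hdom, hlt⟩ := improving_lex strat hd hstrat c hc hxK hν hmove
  exact hmin ν hν k hk hdom hlt

end strictcase

/-- Every infinite bottleneck congestion game with
nondecreasing continuous facility cost functions possesses a strong Nash
equilibrium. -/
theorem stmt_18 {ι F : Type*} [Fintype ι] [Nonempty ι] [Fintype F] [Nonempty F]
    [DecidableEq F] {ni : ι → ℕ} (hni : ∀ i, 0 < ni i)
    (strat : ∀ i, Fin (ni i) → Finset F) (hstrat : ∀ i j, (strat i j).Nonempty)
    (d : ι → ℝ≥0) (hd : ∀ i, 0 < d i)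
    (c : F → ℝ≥0 → ℝ≥0) (hc : ∀ f, Monotone (c f)) (hcont : ∀ f, Continuous (c f)) :
    ∃ ξ : ∀ i, Fin (ni i) → ℝ≥0, (∀ i, ∑ j, ξ i j = d i) ∧
      ∀ ν : ∀ i, Fin (ni i) → ℝ≥0, (∀ i, ∑ j, ν i j = d i) →
        ¬ ImprovingMove (btlCost c strat) ξ ν := by
  classical
  have hstep : ∀ n : ℕ, ∃ ξ : ∀ i, Fin (ni i) → ℝ≥0, (∀ i, ∑ j, ξ i j = d i) ∧
      ∀ ν, (∀ i, ∑ j, ν i j = d i) →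
        ¬ ImprovingMove (btlCost (fun f t => c f t + t * ((n : ℝ≥0) + 1)⁻¹) strat) ξ ν := by
    intro n
    refine sne_strict hni strat hstrat d hd _ ?_ ?_
    · intro f s t hst
      exact add_lt_add_of_le_of_lt (hc f hst.le) (mul_lt_mul_of_pos_right hst (by positivity))
    · intro f
      exact (hcont f).add (continuous_id.mul continuous_const)
  choose ξs hfeas hSNE using hstep
  have hmemK : ∀ n, ξs n ∈ {x : ∀ i, Fin (ni i) → ℝ≥0 | ∀ i, ∑ j, x i j = d i} := hfeas
  obtain ⟨ξ, hξK, φ, hφ, hconv⟩ := (feas_isCompact d).tendsto_subseq hmemK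
  refine ⟨ξ, hξK, fun ν hν hmove => ?_⟩
  obtain ⟨S, hSne, hout, hin⟩ := hmove
  set νn : ℕ → ∀ i, Fin (ni i) → ℝ≥0 := fun n i => if i ∈ S then ν i else ξs (φ n) i with hνn
  have hcoord : ∀ i j, Tendsto (fun n => ξs (φ n) i j) atTop (nhds (ξ i j)) := by
    intro i j
    exact (((continuous_apply j).comp (continuous_apply i)).tendsto ξ).comp hconv
  have hνcoord : ∀ i j, Tendsto (fun n => νn n i j) atTop (nhds (ν i j)) := by
    intro i j
    by_cases hi : i ∈ S
    · simp only [hνn, if_pos hi]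
      exact tendsto_const_nhds
    · simp only [hνn, if_neg hi, hout i hi]
      exact hcoord i j
  have hloadν : ∀ f, Tendsto (fun n => facLoad strat (νn n) f) atTop
      (nhds (facLoad strat ν f)) := by
    intro f
    unfold facLoad
    exact tendsto_finset_sum _ fun i _ => tendsto_finset_sum _ fun j _ => hνcoord i j
  have hloadξ : ∀ f, Tendsto (fun n => facLoad strat (ξs (φ n)) f) atTop
      (nhds (facLoad strat ξ f)) := by
    intro f
    unfold facLoad
    exact tendsto_finset_sum _ fun i _ => tendsto_finset_sum _ fun j _ => hcoord i j
  have hε : Tendsto (fun n => ((φ n : ℝ≥0) + 1)⁻¹) atTop (nhds 0) := by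
    have h0 : Tendsto (fun m : ℕ => ((m : ℝ≥0) + 1)⁻¹) atTop (nhds 0) := by
      rw [← NNReal.tendsto_coe]
      simpa [one_div] using tendsto_one_div_add_atTop_nhds_zero_nat (𝕜 := ℝ)
    exact h0.comp hφ.tendsto_atTop
  have key : ∀ i ∈ S, ∀ᶠ n in atTop,
      btlCost (fun f t => c f t + t * ((φ n : ℝ≥0) + 1)⁻¹) strat (νn n) i <
      btlCost (fun f t => c f t + t * ((φ n : ℝ≥0) + 1)⁻¹) strat (ξs (φ n)) i := by
    intro i hiS
    have hused : ∀ n, usedFac strat (νn n) i = usedFac strat ν i := by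
      intro n
      ext f
      rw [mem_usedFac strat, mem_usedFac strat]
      simp only [hνn, if_pos hiS]
    have hLHS : Tendsto
        (fun n => btlCost (fun f t => c f t + t * ((φ n : ℝ≥0) + 1)⁻¹) strat (νn n) i)
        atTop (nhds (btlCost c strat ν i)) := by
      have heq : ∀ n, btlCost (fun f t => c f t + t * ((φ n : ℝ≥0) + 1)⁻¹) strat (νn n) i =
          (usedFac strat ν i).sup fun f =>
            c f (facLoad strat (νn n) f) + facLoad strat (νn n) f * ((φ n : ℝ≥0) + 1)⁻¹ := by
        intro n
        unfold btlCost
        rw [hused n]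
      refine Tendsto.congr (fun n => (heq n).symm) ?_
      have : Tendsto (fun n => (usedFac strat ν i).sup fun f =>
          c f (facLoad strat (νn n) f) + facLoad strat (νn n) f * ((φ n : ℝ≥0) + 1)⁻¹)
          atTop (nhds ((usedFac strat ν i).sup fun f => c f (facLoad strat ν f))) := by
        refine tendsto_finset_sup_nnreal _ fun f _ => ?_
        have := (((hcont f).tendsto _).comp (hloadν f)).add ((hloadν f).mul hε)
        simpa using this
      exact this
    have husedξ : (usedFac strat ξ i).Nonempty :=
      usedFac_nonempty strat hstrat (by rw [hξK i]; exact hd i)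
    obtain ⟨fs, hfsmem, hfsval⟩ :=
      Finset.exists_mem_eq_sup (usedFac strat ξ i) husedξ (fun f => c f (facLoad strat ξ f))
    obtain ⟨j1, hj1f, hj1pos⟩ := (mem_usedFac strat).1 hfsmem
    have hjev : ∀ᶠ n in atTop, 0 < ξs (φ n) i j1 :=
      (hcoord i j1).eventually (eventually_gt_nhds hj1pos)
    have hrtend : Tendsto (fun n => c fs (facLoad strat (ξs (φ n)) fs)) atTop
        (nhds (btlCost c strat ξ i)) := by
      rw [show btlCost c strat ξ i = c fs (facLoad strat ξ fs) from hfsval]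
      exact ((hcont fs).tendsto _).comp (hloadξ fs)
    have hmain := hLHS.eventually_lt hrtend (hin i hiS)
    filter_upwards [hmain, hjev] with n h1 h2
    refine lt_of_lt_of_le h1 ?_
    have hfsn : fs ∈ usedFac strat (ξs (φ n)) i := (mem_usedFac strat).2 ⟨j1, hj1f, h2⟩
    calc c fs (facLoad strat (ξs (φ n)) fs)
        ≤ c fs (facLoad strat (ξs (φ n)) fs) +
            facLoad strat (ξs (φ n)) fs * ((φ n : ℝ≥0) + 1)⁻¹ := le_self_add
      _ ≤ btlCost (fun f t => c f t + t * ((φ n : ℝ≥0) + 1)⁻¹) strat (ξs (φ n)) i :=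
          Finset.le_sup (f := fun f => c f (facLoad strat (ξs (φ n)) f) +
            facLoad strat (ξs (φ n)) f * ((φ n : ℝ≥0) + 1)⁻¹) hfsn
  have hall : ∀ᶠ n in atTop,
      ∀ i ∈ S, btlCost (fun f t => c f t + t * ((φ n : ℝ≥0) + 1)⁻¹) strat (νn n) i <
        btlCost (fun f t => c f t + t * ((φ n : ℝ≥0) + 1)⁻¹) strat (ξs (φ n)) i :=
    (Finset.eventually_all S).2 key
  obtain ⟨n, hn⟩ := hall.exists
  refine hSNE (φ n) (νn n) ?_ ⟨S, hSne, ?_, ?_⟩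
  · intro i
    by_cases hi : i ∈ S
    · simp only [hνn, if_pos hi]
      exact hν i
    · simp only [hνn, if_neg hi]
      exact hfeas (φ n) i
  · intro i hi
    simp only [hνn, if_neg hi]
  · exact hn
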